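/- Let λ ∈ ℂ and let σ, μ ∈ ℂ with σ ≠ 0, 1 + |λ|²σ ≠ 0, and μ² = e^σ(1 + |λ|²σ)/σ. Define functions on [0,1] by z₁₁(x) = μσ·e^{σ(x−1)}, z₂₂(x) = μσ·e^{−σx}, and constants z₁₂ = −conj(λ)·σ, z₂₁ = −λ·σ. Then for every x ∈ [0,1], the 2×2 matrix z(x) = [[z₁₁(x), z₁₂],[z₂₁, z₂₂(x)]] has determinant σ (in particular is invertible), and [[L*(z₂₂)(x), −conj(λ)],[−λ, L(z₁₁)(x)]] + z(x)^{-1} = μ·I₂, where I₂ is the 2×2 identity matrix. -/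

import Mathlib

/-- Verification that the explicit matrix `z` solves the amalgamated `R`-transform equation for
`T̃_λ`: with `σ ≠ 0`, `1 + |λ|²σ ≠ 0`, `μ² = e^σ(1+|λ|²σ)/σ`,
`z₁₁(x) = μσe^{σ(x−1)}`, `z₂₂(x) = μσe^{−σx}`, `z₁₂ = −conj(λ)σ`, `z₂₁ = −λσ`, one has
`det z(x) = σ` and `[[L*(z₂₂)(x), −conj λ],[−λ, L(z₁₁)(x)]] + z(x)⁻¹ = μ·I₂` on `[0,1]`. -/
theorem R_transform_solution_T_lambda (lam σ μ : ℂ) (hσ : σ ≠ 0)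
    (hlam : 1 + (‖lam‖ : ℂ) ^ 2 * σ ≠ 0)
    (hμ : μ ^ 2 = Complex.exp σ * (1 + (‖lam‖ : ℂ) ^ 2 * σ) / σ)
    (z11 z22 : ℝ → ℂ) (z12 z21 : ℂ)
    (hz11 : ∀ x : ℝ, z11 x = μ * σ * Complex.exp (σ * ((x : ℂ) - 1)))
    (hz22 : ∀ x : ℝ, z22 x = μ * σ * Complex.exp (-σ * (x : ℂ)))
    (hz12 : z12 = -(starRingEnd ℂ) lam * σ) (hz21 : z21 = -lam * σ) :
    ∀ x ∈ Set.Icc (0:ℝ) 1,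
      (!![z11 x, z12; z21, z22 x] : Matrix (Fin 2) (Fin 2) ℂ).det = σ ∧
      !![∫ t in (0:ℝ)..x, z22 t, -(starRingEnd ℂ) lam;
         -lam, ∫ t in x..(1:ℝ), z11 t] +
          (!![z11 x, z12; z21, z22 x] : Matrix (Fin 2) (Fin 2) ℂ)⁻¹ =
        μ • (1 : Matrix (Fin 2) (Fin 2) ℂ) := by
  intro x _
  set E1 := Complex.exp (σ * ((x : ℂ) - 1)) with hE1
  set E2 := Complex.exp (-σ * (x : ℂ)) with hE2
  have hn : ((‖lam‖ : ℝ) : ℂ) ^ 2 = (starRingEnd ℂ) lam * lam := by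
    rw [mul_comm, Complex.mul_conj, ← Complex.sq_norm]
    norm_cast
  have hmu2 : μ ^ 2 * σ = Complex.exp σ * (1 + (starRingEnd ℂ) lam * lam * σ) := by
    rw [← hn]
    field_simp at hμ
    linear_combination hμ
  have hEE : E1 * E2 * Complex.exp σ = 1 := by
    have h0 : σ * ((x : ℂ) - 1) + -σ * (x : ℂ) + σ = 0 := by ring
    rw [hE1, hE2, ← Complex.exp_add, ← Complex.exp_add, h0, Complex.exp_zero]
  clear_value E1 E2
  have hdet : (!![z11 x, z12; z21, z22 x] : Matrix (Fin 2) (Fin 2) ℂ).det = σ := by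
    rw [Matrix.det_fin_two_of, hz11 x, hz22 x, hz12, hz21, ← hE1, ← hE2]
    linear_combination σ * E1 * E2 * hmu2 +
      σ * (1 + (starRingEnd ℂ) lam * lam * σ) * hEE
  refine ⟨hdet, ?_⟩
  have hinv : (!![z11 x, z12; z21, z22 x] : Matrix (Fin 2) (Fin 2) ℂ)⁻¹ =
      !![μ * E2, (starRingEnd ℂ) lam; lam, μ * E1] := by
    apply Matrix.inv_eq_right_inv
    rw [hz11 x, hz22 x, hz12, hz21, ← hE1, ← hE2]
    ext i j
    fin_cases i <;> fin_cases j <;>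
      simp [Matrix.mul_apply, Fin.sum_univ_two, Matrix.one_apply] <;>
      first
        | ring1
        | linear_combination E1 * E2 * hmu2 +
            (1 + (starRingEnd ℂ) lam * lam * σ) * hEE
  have hi1 : (∫ t in (0:ℝ)..x, z22 t) = μ * (1 - E2) := by
    have h : (∫ t in (0:ℝ)..x, z22 t) = μ * σ * ∫ t in (0:ℝ)..x, Complex.exp (-σ * t) := by
      rw [← intervalIntegral.integral_const_mul]
      exact intervalIntegral.integral_congr fun t _ => hz22 t
    rw [h, integral_exp_mul_complex (neg_ne_zero.mpr hσ)]
    rw [show -σ * ((0:ℝ):ℂ) = 0 by push_cast; ring, Complex.exp_zero, ← hE2]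
    field_simp
    first
      | ring1
      | linear_combination (μ - μ * E2) * (mul_inv_cancel₀ hσ)
  have hi2 : (∫ t in x..(1:ℝ), z11 t) = μ * (1 - E1) := by
    have h : (∫ t in x..(1:ℝ), z11 t)
        = μ * σ * Complex.exp (-σ) * ∫ t in x..(1:ℝ), Complex.exp (σ * t) := by
      rw [← intervalIntegral.integral_const_mul]
      refine intervalIntegral.integral_congr fun t _ => ?_
      rw [hz11 t, show μ * σ * Complex.exp (-σ) * Complex.exp (σ * (t:ℂ))
        = μ * σ * (Complex.exp (-σ) * Complex.exp (σ * (t:ℂ))) from by ring,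
        ← Complex.exp_add]
      congr 2
      ring
    rw [h, integral_exp_mul_complex hσ]
    have h1 : E1 = Complex.exp (-σ) * Complex.exp (σ * (x:ℂ)) := by
      rw [hE1, ← Complex.exp_add]; congr 1; ring
    have h2 : Complex.exp (-σ) * Complex.exp σ = 1 := by
      rw [← Complex.exp_add]; simp
    rw [show σ * ((1:ℝ):ℂ) = σ by push_cast; ring]
    field_simp
    linear_combination μ * h2 + μ * h1
  rw [hinv, hi1, hi2]
  ext i j
  fin_cases i <;> fin_cases j <;>
    simp [Matrix.one_apply] <;> ring
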